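/- For integers 0 < p < q, let A_{p,q} denote the C*-algebra of continuous functions f : [0,1] → M_q(ℂ) such that f(0) = μ·(1_p ⊕ 0_{q−p}) and f(1) = λ·1_q for some scalars μ, λ ∈ ℂ. Then the minimal unitization of A_{p,q} is *-isomorphic to the minimal unitization of A_{q−p,q}. -/

import Mathlib

open Matrix

noncomputable section

/-- The diagonal `q × q` projection with `1` in the first `p` diagonal entries. -/
def diagProj (p q : ℕ) : Matrix (Fin q) (Fin q) ℂ :=
  Matrix.diagonal fun i => if (i : ℕ) < p then (1 : ℂ) else 0

lemma diagProj_mul_self (p q : ℕ) : diagProj p q * diagProj p q = diagProj p q := by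
  have h : (fun i : Fin q => (if (i : ℕ) < p then (1 : ℂ) else 0) *
      (if (i : ℕ) < p then (1 : ℂ) else 0)) =
      fun i : Fin q => if (i : ℕ) < p then (1 : ℂ) else 0 := by
    funext i; by_cases h : (i : ℕ) < p <;> simp [h]
  rw [diagProj, Matrix.diagonal_mul_diagonal, h]

lemma diagProj_star (p q : ℕ) : star (diagProj p q) = diagProj p q := by
  have h : (star fun i : Fin q => if (i : ℕ) < p then (1 : ℂ) else 0) =
      fun i : Fin q => if (i : ℕ) < p then (1 : ℂ) else 0 := by
    funext i; by_cases h : (i : ℕ) < p <;> simp [h]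
  rw [diagProj, Matrix.star_eq_conjTranspose, Matrix.diagonal_conjTranspose, h]

/-- The 1-dimensional NCCW complex `A_{p,q}`: continuous functions
`f : [0,1] → M_q(ℂ)` with `f 0 = μ·(1_p ⊕ 0_{q-p})` and `f 1 = λ·1_q` for some scalars
`μ, λ ∈ ℂ`, as a non-unital ∗-subalgebra of `C([0,1], M_q(ℂ))`. -/
def Apq (p q : ℕ) :
    NonUnitalStarSubalgebra ℂ C(unitInterval, Matrix (Fin q) (Fin q) ℂ) where
  carrier := {f | ∃ μ lam : ℂ,
    f 0 = μ • diagProj p q ∧ f 1 = lam • (1 : Matrix (Fin q) (Fin q) ℂ)}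
  add_mem' := by
    rintro f g ⟨μ₁, l₁, h₁0, h₁1⟩ ⟨μ₂, l₂, h₂0, h₂1⟩
    exact ⟨μ₁ + μ₂, l₁ + l₂, by simp [h₁0, h₂0, add_smul], by simp [h₁1, h₂1, add_smul]⟩
  zero_mem' := ⟨0, 0, by simp, by simp⟩
  mul_mem' := by
    rintro f g ⟨μ₁, l₁, h₁0, h₁1⟩ ⟨μ₂, l₂, h₂0, h₂1⟩
    refine ⟨μ₁ * μ₂, l₁ * l₂, ?_, ?_⟩
    · rw [ContinuousMap.mul_apply, h₁0, h₂0, smul_mul_smul_comm, diagProj_mul_self]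
    · rw [ContinuousMap.mul_apply, h₁1, h₂1, smul_mul_smul_comm, one_mul]
  smul_mem' := by
    rintro c f ⟨μ, l, h0, h1⟩
    exact ⟨c * μ, c * l, by simp [h0, smul_smul], by simp [h1, smul_smul]⟩
  star_mem' := by
    rintro f ⟨μ, l, h0, h1⟩
    refine ⟨star μ, star l, ?_, ?_⟩
    · rw [ContinuousMap.star_apply, h0, star_smul, diagProj_star]
    · rw [ContinuousMap.star_apply, h1, star_smul, star_one]

namespace ApqAux

/-- The cyclic shift by `s` on `Fin q`. -/
def shiftEquiv (q s : ℕ) (hs : s < q) : Fin q ≃ Fin q :=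
  haveI : NeZero q := ⟨by omega⟩
  Equiv.addRight (⟨s, hs⟩ : Fin q)

lemma shiftEquiv_val (q s : ℕ) (hs : s < q) (i : Fin q) :
    ((shiftEquiv q s hs i : Fin q) : ℕ) = ((i : ℕ) + s) % q := by
  haveI : NeZero q := ⟨by omega⟩
  simp [shiftEquiv, Fin.add_def]

lemma key {p q : ℕ} (hp : 0 < p) (hpq : p < q) (i : Fin q) :
    ((i : ℕ) + p) % q < p ↔ q - p ≤ (i : ℕ) := by
  have hi : (i : ℕ) < q := i.isLt
  rcases lt_or_ge ((i : ℕ) + p) q with h | h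
  · rw [Nat.mod_eq_of_lt h]; omega
  · have : ((i : ℕ) + p) % q = (i : ℕ) + p - q := by
      rw [Nat.mod_eq_sub_mod h, Nat.mod_eq_of_lt (by omega)]
    rw [this]; omega

lemma shiftEquiv_symm {p q : ℕ} (hp : 0 < p) (hpq : p < q) :
    (shiftEquiv q p hpq).symm = shiftEquiv q (q - p) (by omega) := by
  apply Equiv.ext; intro i
  rw [Equiv.symm_apply_eq]
  apply Fin.ext
  rw [shiftEquiv_val, shiftEquiv_val, Nat.mod_add_mod]
  have h : (i : ℕ) + (q - p) + p = (i : ℕ) + q := by omega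
  rw [h, Nat.add_mod_right, Nat.mod_eq_of_lt i.isLt]

variable {q : ℕ}

/-- Conjugation by a permutation, as a ∗-algebra automorphism of
`C([0,1], M_q(ℂ))`. -/
def cT (q : ℕ) (e : Fin q ≃ Fin q) :
    C(unitInterval, Matrix (Fin q) (Fin q) ℂ) ≃⋆ₐ[ℂ]
      C(unitInterval, Matrix (Fin q) (Fin q) ℂ) where
  toFun f := ⟨fun t => (f t).submatrix e e,
    (map_continuous f).matrix_submatrix e e⟩
  invFun f := ⟨fun t => (f t).submatrix e.symm e.symm,
    (map_continuous f).matrix_submatrix _ _⟩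
  left_inv f := by ext t i j; simp [Matrix.submatrix_apply]
  right_inv f := by ext t i j; simp [Matrix.submatrix_apply]
  map_mul' f g := ContinuousMap.ext fun t =>
    (Matrix.submatrix_mul_equiv (f t) (g t) e e e).symm
  map_add' f g := by ext t i j; rfl
  map_smul' c f := by ext t i j; rfl
  map_star' f := ContinuousMap.ext fun t =>
    (Matrix.conjTranspose_submatrix (f t) e e).symm

lemma one_not_mem {p : ℕ} (hp : 0 < p) (hpq : p < q) :
    (1 : C(unitInterval, Matrix (Fin q) (Fin q) ℂ)) ∉ Apq p q := by
  rintro ⟨μ, lam, h0, h1⟩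
  have h := congrArg (fun m : Matrix (Fin q) (Fin q) ℂ => m ⟨p, hpq⟩ ⟨p, hpq⟩) h0
  simp [diagProj, Matrix.one_apply_eq, Matrix.diagonal_apply_eq] at h

lemma cT_mem {p : ℕ} (hp : 0 < p) (hpq : p < q)
    (f : C(unitInterval, Matrix (Fin q) (Fin q) ℂ)) (hf : f ∈ Apq p q) :
    ∃ μ : ℂ, cT q (shiftEquiv q p hpq) f - μ • 1 ∈ Apq (q - p) q := by
  obtain ⟨μ, lam, h0, h1⟩ := hf
  refine ⟨μ, -μ, lam - μ, ?_, ?_⟩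
  · show (f 0).submatrix _ _ - μ • 1 = (-μ) • diagProj (q - p) q
    rw [h0]
    ext i j
    rcases eq_or_ne i j with rfl | hij
    · have he : ((shiftEquiv q p hpq i : Fin q) : ℕ) < p ↔ ¬ ((i : ℕ) < q - p) := by
        rw [shiftEquiv_val, key hp hpq, Nat.not_lt]
      by_cases hi : (i : ℕ) < q - p <;>
        simp [Matrix.sub_apply, Matrix.smul_apply, Matrix.submatrix_apply,
          Matrix.diagonal_apply_eq, Matrix.one_apply_eq, diagProj, he, hi]
    · have hij' : shiftEquiv q p hpq i ≠ shiftEquiv q p hpq j :=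
        fun h => hij ((shiftEquiv q p hpq).injective h)
      simp [Matrix.sub_apply, Matrix.smul_apply, Matrix.submatrix_apply,
        Matrix.diagonal_apply_ne _ hij', Matrix.diagonal_apply_ne _ hij,
        Matrix.one_apply_ne hij, diagProj]
  · show (f 1).submatrix _ _ - μ • 1 = (lam - μ) • 1
    rw [h1]
    ext i j
    rcases eq_or_ne i j with rfl | hij
    · simp [Matrix.sub_apply, Matrix.smul_apply, Matrix.submatrix_apply,
        Matrix.one_apply_eq, sub_smul]
    · have hij' : shiftEquiv q p hpq i ≠ shiftEquiv q p hpq j :=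
        fun h => hij ((shiftEquiv q p hpq).injective h)
      simp [Matrix.sub_apply, Matrix.smul_apply, Matrix.submatrix_apply,
        Matrix.one_apply_ne hij, Matrix.one_apply_ne hij']

lemma cT_adjoin_le {p : ℕ} (hp : 0 < p) (hpq : p < q) :
    ∀ x ∈ StarAlgebra.adjoin ℂ ((Apq p q : Set (C(unitInterval, Matrix (Fin q) (Fin q) ℂ)))),
      cT q (shiftEquiv q p hpq) x ∈
        StarAlgebra.adjoin ℂ ((Apq (q - p) q :
          Set (C(unitInterval, Matrix (Fin q) (Fin q) ℂ)))) := by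
  intro x hx
  induction hx using StarAlgebra.adjoin_induction with
  | mem f hf =>
    obtain ⟨μ, hμ⟩ := cT_mem hp hpq f hf
    have hrw : cT q (shiftEquiv q p hpq) f =
        (cT q (shiftEquiv q p hpq) f - μ • 1) + μ • 1 := (sub_add_cancel _ _).symm
    rw [hrw]
    refine add_mem (StarAlgebra.subset_adjoin ℂ _ hμ) ?_
    rw [← Algebra.algebraMap_eq_smul_one]
    exact (StarAlgebra.adjoin ℂ _).algebraMap_mem μ
  | algebraMap r =>
    rw [Algebra.algebraMap_eq_smul_one, _root_.map_smul, _root_.map_one,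
      ← Algebra.algebraMap_eq_smul_one]
    exact (StarAlgebra.adjoin ℂ _).algebraMap_mem r
  | add x y hx hy ihx ihy => rw [_root_.map_add]; exact add_mem ihx ihy
  | mul x y hx hy ihx ihy => rw [_root_.map_mul]; exact mul_mem ihx ihy
  | star x hx ihx => rw [StarHomClass.map_star]; exact star_mem ihx

lemma cT_symm_eq {p : ℕ} (hp : 0 < p) (hpq : p < q) :
    (cT q (shiftEquiv q p hpq)).symm = cT q (shiftEquiv q (q - p) (by omega)) := by
  rw [← shiftEquiv_symm hp hpq]
  rfl

/-- Restriction of a ∗-algebra automorphism to star subalgebras it interchanges. -/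
def equivOfStarSubalgebra
    (e : C(unitInterval, Matrix (Fin q) (Fin q) ℂ) ≃⋆ₐ[ℂ]
      C(unitInterval, Matrix (Fin q) (Fin q) ℂ))
    (Sa Sb : StarSubalgebra ℂ (C(unitInterval, Matrix (Fin q) (Fin q) ℂ)))
    (hab : ∀ x ∈ Sa, e x ∈ Sb) (hba : ∀ y ∈ Sb, e.symm y ∈ Sa) :
    Sa ≃⋆ₐ[ℂ] Sb where
  toFun x := ⟨e x, hab x x.2⟩
  invFun y := ⟨e.symm y, hba y y.2⟩
  left_inv x := Subtype.ext (e.symm_apply_apply x)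
  right_inv y := Subtype.ext (e.apply_symm_apply y)
  map_mul' x y := Subtype.ext <| by simpa using map_mul e (x : C(unitInterval, Matrix (Fin q) (Fin q) ℂ)) (y : C(unitInterval, Matrix (Fin q) (Fin q) ℂ))
  map_add' x y := Subtype.ext <| by simpa using map_add e (x : C(unitInterval, Matrix (Fin q) (Fin q) ℂ)) (y : C(unitInterval, Matrix (Fin q) (Fin q) ℂ))
  map_smul' c x := Subtype.ext <| by simpa using map_smul e c (x : C(unitInterval, Matrix (Fin q) (Fin q) ℂ))
  map_star' x := Subtype.ext <| by simpa using map_star e (x : C(unitInterval, Matrix (Fin q) (Fin q) ℂ))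

end ApqAux

set_option maxHeartbeats 2000000 in
/-- The minimal unitization of `A_{p,q}` is ∗-isomorphic to the minimal unitization of
`A_{q−p,q}`. -/
theorem unitization_Apq_iso (p q : ℕ) (hp : 0 < p) (hpq : p < q) :
    Nonempty
      (Unitization ℂ (Apq p q) ≃⋆ₐ[ℂ] Unitization ℂ (Apq (q - p) q)) := by
  have hp' : 0 < q - p := by omega
  have hq' : q - p < q := by omega
  have hab := ApqAux.cT_adjoin_le hp hpq
  have hba' := ApqAux.cT_adjoin_le hp' hq'
  have hqp : q - (q - p) = p := by omega
  have hba : ∀ y ∈ StarAlgebra.adjoin ℂ ((Apq (q - p) q : Set _)),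
      (ApqAux.cT q (ApqAux.shiftEquiv q p hpq)).symm y ∈
        StarAlgebra.adjoin ℂ ((Apq p q : Set _)) := by
    intro y hy
    rw [ApqAux.cT_symm_eq hp hpq]
    have := hba' y hy
    rwa [hqp] at this
  exact ⟨(NonUnitalStarSubalgebra.unitizationStarAlgEquiv (Apq p q) (ApqAux.one_not_mem hp hpq)).trans <|
    (ApqAux.equivOfStarSubalgebra (ApqAux.cT q (ApqAux.shiftEquiv q p hpq)) _ _ hab hba).trans
      (NonUnitalStarSubalgebra.unitizationStarAlgEquiv (Apq (q - p) q) (ApqAux.one_not_mem hp' hq')).symm⟩
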